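/- Let E be a real inner product space and let φ : E → ℝ be differentiable, L-smooth (gradient L-Lipschitz) and μ-strongly convex with μ > 0, attaining its minimum value φ*. Fix γ with 0 < γ ≤ 1/L and a ∈ (0,1). For any θ ∈ E and any error vector e ∈ E, the inexact gradient step θ⁺ = θ − γ(∇φ(θ) + e) satisfies φ(θ⁺) − φ* ≤ (1 − μγ)(φ(θ) − φ*) + (γ/(2a) + Lγ²/2) ‖e‖². -/

import Mathlib

open scoped RealInnerProductSpace

lemma descent_lemma {E : Type*} [NormedAddCommGroup E] [InnerProductSpace ℝ E]
    (φ : E → ℝ) (φ' : E → E) (L : ℝ)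
    (hdiff : ∀ θ : E, HasFDerivAt φ (innerSL ℝ (φ' θ)) θ)
    (hsmooth : ∀ θ θ' : E, ‖φ' θ' - φ' θ‖ ≤ L * ‖θ' - θ‖)
    (x v : E) : φ (x + v) ≤ φ x + ⟪φ' x, v⟫ + L / 2 * ‖v‖ ^ 2 := by
  set g : ℝ → ℝ := fun t => φ (x + t • v) - t * ⟪φ' x, v⟫ - L * t ^ 2 / 2 * ‖v‖ ^ 2 with hg
  have hd : ∀ t : ℝ, HasDerivAt g
      (⟪φ' (x + t • v), v⟫ - ⟪φ' x, v⟫ - L * t * ‖v‖ ^ 2) t := by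
    intro t
    have h1 : HasDerivAt (fun t : ℝ => x + t • v) v t := by
      simpa using ((hasDerivAt_id t).smul_const v).const_add x
    have h2 : HasDerivAt (fun t : ℝ => φ (x + t • v)) ⟪φ' (x + t • v), v⟫ t := by
      have := (hdiff (x + t • v)).comp_hasDerivAt t h1
      exact this
    have h3 : HasDerivAt (fun t : ℝ => t * ⟪φ' x, v⟫) ⟪φ' x, v⟫ t := by
      simpa using (hasDerivAt_id t).mul_const _
    have h4 : HasDerivAt (fun t : ℝ => L * t ^ 2 / 2 * ‖v‖ ^ 2)
        (L * t * ‖v‖ ^ 2) t := by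
      have h5 := (((hasDerivAt_pow 2 t).const_mul L).div_const 2).mul_const (‖v‖ ^ 2)
      refine h5.congr_deriv ?_
      ring
    exact (h2.sub h3).sub h4
  have key : AntitoneOn g (Set.Icc (0:ℝ) 1) := by
    apply antitoneOn_of_deriv_nonpos (convex_Icc 0 1)
    · exact fun t _ => (hd t).continuousAt.continuousWithinAt
    · exact fun t _ => (hd t).differentiableAt.differentiableWithinAt
    · intro t ht
      rw [interior_Icc] at ht
      rw [(hd t).deriv]
      have hcs : ⟪φ' (x + t • v) - φ' x, v⟫ ≤ ‖φ' (x + t • v) - φ' x‖ * ‖v‖ :=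
        real_inner_le_norm _ _
      have hlip := hsmooth x (x + t • v)
      have hnorm : ‖x + t • v - x‖ = t * ‖v‖ := by
        simp [norm_smul, abs_of_pos ht.1]
      rw [hnorm] at hlip
      have hiv : ⟪φ' (x + t • v) - φ' x, v⟫ = ⟪φ' (x + t • v), v⟫ - ⟪φ' x, v⟫ := by
        rw [inner_sub_left]
      nlinarith [norm_nonneg v, mul_le_mul_of_nonneg_right hlip (norm_nonneg v)]
  have h01 := key (Set.left_mem_Icc.mpr zero_le_one) (Set.right_mem_Icc.mpr zero_le_one)
    zero_le_one
  simp only [hg] at h01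
  norm_num at h01
  linarith

lemma key_ineq (L mu gam a G En ip f : ℝ) (hL : 0 < L) (hLg : L * gam ≤ 1)
    (hg0 : 0 < gam) (ha0 : 0 < a) (ha1 : a < 1) (hG : 0 ≤ G) (hE : 0 ≤ En)
    (hip : -(G * En) ≤ ip) (hPL : mu * f ≤ G ^ 2 / 2) (hf : 0 ≤ f) :
    f + -gam * (G ^ 2 + ip) + L / 2 * (gam ^ 2 * (G ^ 2 + 2 * ip + En ^ 2))
      ≤ (1 - mu * gam) * f + (gam / (2 * a) + L * gam ^ 2 / 2) * En ^ 2 := by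
  obtain ⟨β, hβ⟩ : ∃ β : ℝ, β = gam - L * gam ^ 2 := ⟨_, rfl⟩
  have hβ0 : 0 ≤ β := by nlinarith
  have hβγ : β ≤ gam := by nlinarith [sq_nonneg gam]
  have hY : G * En ≤ (a ^ 2 * G ^ 2 + En ^ 2) / (2 * a) := by
    rw [le_div_iff₀ (by positivity)]
    nlinarith [sq_nonneg (a * G - En)]
  have step1 : -(β * ip) ≤ β * (G * En) := by
    have h := mul_le_mul_of_nonneg_left hip hβ0
    linarith
  have step2 : β * (G * En) ≤ β * ((a ^ 2 * G ^ 2 + En ^ 2) / (2 * a)) :=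
    mul_le_mul_of_nonneg_left hY hβ0
  have step3 : β * ((a ^ 2 * G ^ 2 + En ^ 2) / (2 * a))
      = β * a * G ^ 2 / 2 + β * En ^ 2 / (2 * a) := by
    field_simp
  have step4 : β * a * G ^ 2 / 2 ≤ β * G ^ 2 / 2 := by
    have h := mul_le_mul_of_nonneg_right (mul_le_of_le_one_right hβ0 ha1.le) (sq_nonneg G)
    linarith
  have step5 : β * En ^ 2 / (2 * a) ≤ gam * En ^ 2 / (2 * a) := by
    gcongr
  have step6 : gam * (mu * f) ≤ gam * (G ^ 2 / 2) :=
    mul_le_mul_of_nonneg_left hPL hg0.le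
  have hdiv : gam * En ^ 2 / (2 * a) = gam / (2 * a) * En ^ 2 := by ring
  have hexp : β * ip = gam * ip - L * gam ^ 2 * ip := by rw [hβ]; ring
  have hexp2 : β * G ^ 2 = gam * G ^ 2 - L * gam ^ 2 * G ^ 2 := by rw [hβ]; ring
  nlinarith [step1, step2, step3, step4, step5, step6, hdiv, hexp, hexp2]

/-- **Inexact gradient step (deterministic FedAvg half-step).** Let `E` be a real inner
product space and `φ : E → ℝ` be differentiable with gradient `φ'`, `L`-smooth and
`μ`-strongly convex (`μ > 0`), attaining its minimum value `φ*`. Fix `0 < γ ≤ 1/L` and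
`a ∈ (0,1)`. For any `θ` and any error vector `e`, the inexact step
`θ⁺ = θ - γ (∇φ(θ) + e)` satisfies
`φ(θ⁺) - φ* ≤ (1 - μγ)(φ(θ) - φ*) + (γ/(2a) + Lγ²/2) ‖e‖²`. -/
theorem inexact_gradient_step {E : Type*} [NormedAddCommGroup E] [InnerProductSpace ℝ E]
    (φ : E → ℝ) (φ' : E → E) (L μ : ℝ) (hμ : 0 < μ)
    (hdiff : ∀ θ : E, HasFDerivAt φ (innerSL ℝ (φ' θ)) θ)
    (hsmooth : ∀ θ θ' : E, ‖φ' θ' - φ' θ‖ ≤ L * ‖θ' - θ‖)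
    (hsc : ∀ θ θ' : E, φ θ' ≥ φ θ + ⟪φ' θ, θ' - θ⟫ + μ / 2 * ‖θ' - θ‖ ^ 2)
    (φstar : ℝ) (θstar : E) (hlb : ∀ θ : E, φstar ≤ φ θ) (hatt : φ θstar = φstar)
    (γ a : ℝ) (hγ0 : 0 < γ) (hγL : γ ≤ 1 / L) (ha0 : 0 < a) (ha1 : a < 1)
    (θ e : E) :
    φ (θ - γ • (φ' θ + e)) - φstar
      ≤ (1 - μ * γ) * (φ θ - φstar) + (γ / (2 * a) + L * γ ^ 2 / 2) * ‖e‖ ^ 2 := by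
  have hL : 0 < L := by
    by_contra h
    push_neg at h
    have : 1 / L ≤ 0 := div_nonpos_of_nonneg_of_nonpos zero_le_one h
    linarith
  have hLγ : L * γ ≤ 1 := by
    rw [le_div_iff₀ hL] at hγL
    linarith [mul_comm γ L]
  have hdesc := descent_lemma φ φ' L hdiff hsmooth θ (-(γ • (φ' θ + e)))
  have heq : θ + -(γ • (φ' θ + e)) = θ - γ • (φ' θ + e) := by abel
  rw [heq] at hdesc
  have hinner : ⟪φ' θ, -(γ • (φ' θ + e))⟫ = -γ * (‖φ' θ‖ ^ 2 + ⟪φ' θ, e⟫) := by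
    rw [inner_neg_right, inner_smul_right, inner_add_right, real_inner_self_eq_norm_sq]
    ring
  have hnorm : ‖-(γ • (φ' θ + e))‖ ^ 2 = γ ^ 2 * (‖φ' θ‖ ^ 2 + 2 * ⟪φ' θ, e⟫ + ‖e‖ ^ 2) := by
    rw [norm_neg, norm_smul, mul_pow, Real.norm_eq_abs, sq_abs, norm_add_sq_real]
  rw [hinner, hnorm] at hdesc
  have hPL : μ * (φ θ - φstar) ≤ ‖φ' θ‖ ^ 2 / 2 := by
    have h := hsc θ θstar
    rw [hatt] at h
    have hcs : -(‖φ' θ‖ * ‖θstar - θ‖) ≤ ⟪φ' θ, θstar - θ⟫ := by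
      have h2 := abs_real_inner_le_norm (φ' θ) (θstar - θ)
      linarith [(abs_le.mp h2).1]
    nlinarith [sq_nonneg (‖φ' θ‖ - μ * ‖θstar - θ‖), norm_nonneg (θstar - θ)]
  have hge : 0 ≤ φ θ - φstar := by linarith [hlb θ]
  have hcs2 : -(‖φ' θ‖ * ‖e‖) ≤ ⟪φ' θ, e⟫ := by
    have h2 := abs_real_inner_le_norm (φ' θ) e
    linarith [(abs_le.mp h2).1]
  have key := key_ineq L μ γ a ‖φ' θ‖ ‖e‖ ⟪φ' θ, e⟫ (φ θ - φstar) hL hLγ hγ0 ha0 ha1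
    (norm_nonneg _) (norm_nonneg _) hcs2 hPL hge
  linarith
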